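/- There exists a set function that is NOT submodular, arising from depth-of-choice: define on ground set V = {1,...,7} with singleton resident, objective G(S) = f(Σ_{p=1}^{10} w_p · D_p(S)) where D_p(S) is the p-th smallest element of the multiset {d(j) : j ∈ S} ∪ {2000 repeated 8 times} (existing amenities at distance 2000), d(j) = 1800 for j ∈ {1,...,6} and d(7) = 1, weights w = (0.11, 0.06, 0.04, 0.04, 0.03, 0.03, 0.03, 0.03, 0.03, 0.03) plus fixed terms 0.43·2000 + 0.14·2000 added inside f, and f the piecewise-linear WalkScore through (0,100),(400,95),(1800,10),(2400,0). Then with S = {1,2,3,4}, T = {1,2,3,4,5,6}, e = 7, one has G(S ∪ {e}) − G(S) < G(T ∪ {e}) − G(T), violating submodularity. -/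

import Mathlib

/-- The piecewise-linear WalkScore function through the breakpoints
`(0,100), (400,95), (1800,10), (2400,0)`, equal to `0` beyond `2400`. -/
noncomputable def walkScore (x : ℝ) : ℝ :=
  if x ≤ 400 then 100 - (5 / 400) * x
  else if x ≤ 1800 then 95 - (85 / 1400) * (x - 400)
  else if x ≤ 2400 then 10 - (10 / 600) * (x - 1800)
  else 0

/-- `orderStat m p` is the `p`-th smallest element (0-indexed, counting multiplicity)
of the finite multiset `m` of reals. -/
noncomputable def orderStat (m : Multiset ℝ) (p : ℕ) : ℝ := (m.sort (· ≤ ·)).getD p 0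

/-- Distances of the 7 candidate locations to the single resident:
locations 1–6 at 1800 m, location 7 at 1 m. -/
noncomputable def distCE : Fin 7 → ℝ := fun j => if j = 6 then 1 else 1800

/-- Combined multiset of allocated distances and the 8 existing-amenity
distances (all 2000 m, accounting for 6 restaurants, 1 grocery, 1 school;
the grocery/school terms enter as fixed 2000 m contributions). -/
noncomputable def MsetCE (S : Finset (Fin 7)) : Multiset ℝ :=
  S.val.map distCE + Multiset.replicate 8 2000

/-- Restaurant depth-of-choice weights (normalized, 10 nearest options). -/
noncomputable def wCE : Fin 10 → ℝ :=
  ![0.11, 0.06, 0.04, 0.04, 0.03, 0.03, 0.03, 0.03, 0.03, 0.03]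

/-- Depth-of-choice weighted distance: fixed grocery (0.43) and school (0.14)
terms at 2000 m plus the weighted order statistics of the restaurant distances. -/
noncomputable def lCE (S : Finset (Fin 7)) : ℝ :=
  0.43 * 2000 + 0.14 * 2000 + ∑ p : Fin 10, wCE p * orderStat (MsetCE S) p.val

/-- Depth-of-choice objective for the single resident. -/
noncomputable def GCE (S : Finset (Fin 7)) : ℝ := walkScore (lCE S)

/-- with `S = {1,2,3,4}`, `T = {1,2,3,4,5,6}` and `e = 7`
(0-indexed below), the depth-of-choice objective violates submodularity:
the marginal gain of `e` at the smaller set is strictly less than at the larger set. -/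
-- auxiliary
def ndCE : Fin 7 → ℕ := fun j => if j = 6 then 1 else 1800

lemma distCE_eq (j : Fin 7) : distCE j = (ndCE j : ℝ) := by
  unfold distCE ndCE; split <;> norm_num

lemma sort_of_sorted (m : Multiset ℝ) (L : List ℝ) (hm : m = ↑L) (hL : L.Pairwise (· ≤ ·)) :
    m.sort (· ≤ ·) = L :=
  List.Perm.eq_of_pairwise' (r := (· ≤ ·)) (Multiset.pairwise_sort _ _) hL
    (Multiset.coe_eq_coe.mp (by rw [Multiset.sort_eq, hm]))

lemma msetCE_eq (S : Finset (Fin 7)) (nl : List ℕ)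
    (h : S.val.map ndCE + Multiset.replicate 8 2000 = (↑nl : Multiset ℕ)) :
    MsetCE S = ↑(nl.map (fun n : ℕ => (n : ℝ))) := by
  unfold MsetCE
  have : Multiset.map distCE S.val = Multiset.map (fun n : ℕ => (n : ℝ)) (S.val.map ndCE) := by
    rw [Multiset.map_map]; exact Multiset.map_congr rfl (fun j _ => distCE_eq j)
  rw [this, show (Multiset.replicate 8 (2000:ℝ))
        = Multiset.map (fun n : ℕ => (n : ℝ)) (Multiset.replicate 8 2000) by simp,
      ← Multiset.map_add, h]
  rfl

lemma sortCE (S : Finset (Fin 7)) (nl : List ℕ)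
    (h : S.val.map ndCE + Multiset.replicate 8 2000 = (↑nl : Multiset ℕ))
    (hs : nl.Pairwise (· ≤ ·)) :
    (MsetCE S).sort (· ≤ ·) = nl.map (fun n : ℕ => (n : ℝ)) := by
  refine sort_of_sorted _ _ (msetCE_eq S nl h) ?_
  exact List.Pairwise.map _ (fun a b hab => by exact_mod_cast hab) hs

theorem stmt_10 :
    let S : Finset (Fin 7) := {0, 1, 2, 3}
    let T : Finset (Fin 7) := {0, 1, 2, 3, 4, 5}
    let e : Fin 7 := 6
    S ⊆ T ∧ e ∉ T ∧
      GCE (insert e S) - GCE S < GCE (insert e T) - GCE T := by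
  intro S T e
  refine ⟨by decide, by decide, ?_⟩
  have h1 : (MsetCE S).sort (· ≤ ·)
      = ([1800,1800,1800,1800,2000,2000,2000,2000,2000,2000,2000,2000] : List ℕ).map
          (fun n : ℕ => (n : ℝ)) := sortCE _ _ (by decide) (by decide)
  have h2 : (MsetCE (insert e S)).sort (· ≤ ·)
      = ([1,1800,1800,1800,1800,2000,2000,2000,2000,2000,2000,2000,2000] : List ℕ).map
          (fun n : ℕ => (n : ℝ)) := sortCE _ _ (by decide) (by decide)
  have h3 : (MsetCE T).sort (· ≤ ·)
      = ([1800,1800,1800,1800,1800,1800,2000,2000,2000,2000,2000,2000,2000,2000] : List ℕ).map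
          (fun n : ℕ => (n : ℝ)) := sortCE _ _ (by decide) (by decide)
  have h4 : (MsetCE (insert e T)).sort (· ≤ ·)
      = ([1,1800,1800,1800,1800,1800,1800,2000,2000,2000,2000,2000,2000,2000,2000] : List ℕ).map
          (fun n : ℕ => (n : ℝ)) := sortCE _ _ (by decide) (by decide)
  have l1 : lCE S = 1950 := by
    unfold lCE orderStat wCE
    rw [h1]
    simp [Fin.sum_univ_succ]
    norm_num
  have l2 : lCE (insert e S) = 1746.11 := by
    unfold lCE orderStat wCE
    rw [h2]
    simp [Fin.sum_univ_succ]
    norm_num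
  have l3 : lCE T = 1938 := by
    unfold lCE orderStat wCE
    rw [h3]
    simp [Fin.sum_univ_succ]
    norm_num
  have l4 : lCE (insert e T) = 1734.11 := by
    unfold lCE orderStat wCE
    rw [h4]
    simp [Fin.sum_univ_succ]
    norm_num
  unfold GCE walkScore
  rw [l1, l2, l3, l4]
  norm_num
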